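/- Suppose T_1,...,T_T are i.i.d. Geometric(p) random variables (0 < p, T·p < 1), demand is deterministic with one arrival per round (so cumulative arrivals through round t equal t and N̄ = T), T ≥ 2, and δ ∈ (0,1). Then for any allocation schedule σ (any bijection of {1,...,T}), the maximal feasible static allocation X̲ = sup{X ≥ 0 : X ≤ (T − Δ̄(X))/T} satisfies X̲ ≥ 1 − 3 T p − log(3 log(T)/δ)/T. Consequently the perishing-induced loss ℒ^perish = 1 − X̲ satisfies ℒ^perish ≤ 3 T p + log(3 log(T)/δ)/T. -/

import Mathlib

open MeasureTheory ProbabilityTheory Finset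

/-- Worst-case expected spoilage under the static allocation `X`:
`μX(X) = Σ_b P(Tb b < min{T, τ_b(1 ∣ X, σ)})`, where `τ_b(1 ∣ X, σ) = ⌈σ(b)/X⌉` is the
latest possible allocation time of unit `b` (one deterministic arrival per round). -/
noncomputable def muX {Ω : Type*} [MeasurableSpace Ω] (μ : Measure Ω) (T : ℕ)
    (rank : Fin T → ℕ) (Tb : Fin T → Ω → ℕ) (X : ℝ) : ℝ :=
  ∑ b : Fin T, (μ {ω | Tb b ω < min T ⌈(rank b : ℝ) / X⌉₊}).toReal

/-- The confidence term `Conf^P_1(m) = (1/2)(log(3 log T/δ) + √(log²(3 log T/δ) + 8 m log(3 log T/δ)))`. -/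
noncomputable def confP (T : ℕ) (δ m : ℝ) : ℝ :=
  (1 / 2) * (Real.log (3 * Real.log T / δ) +
    Real.sqrt ((Real.log (3 * Real.log T / δ)) ^ 2 + 8 * m * Real.log (3 * Real.log T / δ)))

/-- The worst-case perishing loss `Δ̄(X) = min{B, μX(X) + Conf^P_1(μX(X))}` (here `B = T`). -/
noncomputable def deltaBar {Ω : Type*} [MeasurableSpace Ω] (μ : Measure Ω) (T : ℕ)
    (rank : Fin T → ℕ) (Tb : Fin T → Ω → ℕ) (δ X : ℝ) : ℝ :=
  min (T : ℝ) (muX μ T rank Tb X + confP T δ (muX μ T rank Tb X))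

/-- The maximal feasible static allocation
`X̲ = sup{X ≥ 0 ∣ X ≤ (T − Δ̄(X))/T}` (with `B = T` and `N̄ = T`). -/
noncomputable def Xlower {Ω : Type*} [MeasurableSpace Ω] (μ : Measure Ω) (T : ℕ)
    (rank : Fin T → ℕ) (Tb : Fin T → Ω → ℕ) (δ : ℝ) : ℝ :=
  sSup {X : ℝ | 0 ≤ X ∧ X ≤ ((T : ℝ) - deltaBar μ T rank Tb δ X) / (T : ℝ)}

/-- For i.i.d. `Geometric(p)` perishing times (`0 < p`, `T·p < 1`),
deterministic demand of one arrival per round, `T ≥ 2` and `δ ∈ (0,1)`: for every allocation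
schedule `σ` (a bijection of `{1,…,T}`, here `rank b = σ(b) = (σ b) + 1`), the maximal
feasible static allocation satisfies `X̲ ≥ 1 − 3Tp − log(3 log T/δ)/T`; consequently the
perishing-induced loss `ℒ^perish = 1 − X̲` is at most `3Tp + log(3 log T/δ)/T`. -/
theorem stmt12 {Ω : Type*} [MeasurableSpace Ω] (μ : Measure Ω) [IsProbabilityMeasure μ]
    (T : ℕ) (hT : 2 ≤ T)
    (p : ℝ) (hp : 0 < p) (hTp : (T : ℝ) * p < 1)
    (δ : ℝ) (hδ : δ ∈ Set.Ioo (0 : ℝ) 1)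
    (Tb : Fin T → Ω → ℕ) (hmeas : ∀ b, Measurable (Tb b))
    (hindep : iIndepFun Tb μ)
    (hgeom : ∀ b : Fin T, ∀ k : ℕ, 1 ≤ k →
      μ {ω | Tb b ω = k} = ENNReal.ofReal (p * (1 - p) ^ (k - 1)))
    (hTb1 : ∀ b, ∀ᵐ ω ∂μ, 1 ≤ Tb b ω)
    (σ : Equiv.Perm (Fin T)) :
    1 - 3 * (T : ℝ) * p - Real.log (3 * Real.log T / δ) / (T : ℝ)
        ≤ Xlower μ T (fun b => (σ b : ℕ) + 1) Tb δ ∧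
    1 - Xlower μ T (fun b => (σ b : ℕ) + 1) Tb δ
        ≤ 3 * (T : ℝ) * p + Real.log (3 * Real.log T / δ) / (T : ℝ) := by
  obtain ⟨hδ0, hδ1⟩ := hδ
  set rank : Fin T → ℕ := fun b => (σ b : ℕ) + 1 with hrank
  have hT0 : (0:ℝ) < T := by
    have : (2:ℝ) ≤ T := by exact_mod_cast hT
    linarith
  have hTR : (2:ℝ) ≤ T := by exact_mod_cast hT
  have h1p : 0 ≤ 1 - p := by nlinarith
  set L := Real.log (3 * Real.log T / δ) with hLdef
  have hlog2 : (1:ℝ) ≤ 3 * Real.log 2 := by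
    nlinarith [Real.log_two_gt_d9]
  have hlogT : Real.log 2 ≤ Real.log T := by
    apply Real.log_le_log (by norm_num)
    exact_mod_cast hT
  have hL0 : 0 ≤ L := by
    apply Real.log_nonneg
    rw [one_le_div hδ0]
    linarith
  -- each term of muX is at most T * p
  have hterm : ∀ (b : Fin T) (c : ℕ), (μ {ω | Tb b ω < min T c}).toReal ≤ (T:ℝ) * p := by
    intro b c
    have h0 : μ {ω | Tb b ω = 0} = 0 := by
      have hae := hTb1 b
      rw [ae_iff] at hae
      refine measure_mono_null ?_ hae
      intro ω hω
      simp only [Set.mem_setOf_eq] at hω ⊢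
      omega
    have hsub : {ω | Tb b ω < min T c} ⊆ ⋃ k ∈ Finset.range T, {ω | Tb b ω = k} := by
      intro ω hω
      simp only [Set.mem_setOf_eq] at hω
      exact Set.mem_biUnion (Finset.mem_range.mpr (lt_of_lt_of_le hω (min_le_left _ _))) rfl
    have hk : ∀ k ∈ Finset.range T, μ {ω | Tb b ω = k} ≤ ENNReal.ofReal p := by
      intro k _
      rcases Nat.eq_zero_or_pos k with rfl | hk1
      · simp [h0]
      · rw [hgeom b k hk1]
        apply ENNReal.ofReal_le_ofReal
        have hpow : (1 - p) ^ (k - 1) ≤ 1 := pow_le_one₀ h1p (by linarith)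
        nlinarith
    have hle : μ {ω | Tb b ω < min T c} ≤ ENNReal.ofReal ((T:ℝ) * p) := by
      calc μ {ω | Tb b ω < min T c}
          ≤ μ (⋃ k ∈ Finset.range T, {ω | Tb b ω = k}) := measure_mono hsub
        _ ≤ ∑ k ∈ Finset.range T, μ {ω | Tb b ω = k} := measure_biUnion_finset_le _ _
        _ ≤ ∑ _k ∈ Finset.range T, ENNReal.ofReal p := Finset.sum_le_sum hk
        _ = ENNReal.ofReal ((T:ℝ) * p) := by
            rw [Finset.sum_const, Finset.card_range, nsmul_eq_mul,
              ENNReal.ofReal_mul hT0.le]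
            congr 1
            exact (ENNReal.ofReal_natCast T).symm
    exact ENNReal.toReal_le_of_le_ofReal (by positivity) hle
  -- muX bounds
  have hmu0 : ∀ X : ℝ, 0 ≤ muX μ T rank Tb X := by
    intro X
    exact Finset.sum_nonneg fun b _ => ENNReal.toReal_nonneg
  have hmuB : ∀ X : ℝ, muX μ T rank Tb X ≤ (T:ℝ)^2 * p := by
    intro X
    calc muX μ T rank Tb X ≤ ∑ _b : Fin T, (T:ℝ) * p :=
          Finset.sum_le_sum fun b _ => hterm b _
      _ = (T:ℝ)^2 * p := by
          rw [Finset.sum_const, Finset.card_univ, Fintype.card_fin, nsmul_eq_mul]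
          ring
  -- confP bound
  have hconf : ∀ m : ℝ, 0 ≤ m → confP T δ m ≤ L + 2 * m := by
    intro m hm
    have hs : Real.sqrt (L ^ 2 + 8 * m * L) ≤ L + 4 * m := by
      calc Real.sqrt (L ^ 2 + 8 * m * L) ≤ Real.sqrt ((L + 4 * m) ^ 2) :=
            Real.sqrt_le_sqrt (by nlinarith)
        _ = L + 4 * m := Real.sqrt_sq (by linarith)
    have : confP T δ m = (1/2) * (L + Real.sqrt (L ^ 2 + 8 * m * L)) := rfl
    rw [this]
    linarith
  have hconf0 : ∀ m : ℝ, 0 ≤ m → 0 ≤ confP T δ m := by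
    intro m hm
    have : confP T δ m = (1/2) * (L + Real.sqrt (L ^ 2 + 8 * m * L)) := rfl
    rw [this]
    have := Real.sqrt_nonneg (L ^ 2 + 8 * m * L)
    linarith
  -- deltaBar bounds
  have hdB : ∀ X : ℝ, deltaBar μ T rank Tb δ X ≤ L + 3 * (T:ℝ)^2 * p := by
    intro X
    calc deltaBar μ T rank Tb δ X
        ≤ muX μ T rank Tb X + confP T δ (muX μ T rank Tb X) := min_le_right _ _
      _ ≤ muX μ T rank Tb X + (L + 2 * muX μ T rank Tb X) := by
          linarith [hconf _ (hmu0 X)]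
      _ ≤ L + 3 * (T:ℝ)^2 * p := by linarith [hmuB X]
  have hdB0 : ∀ X : ℝ, 0 ≤ deltaBar μ T rank Tb δ X := by
    intro X
    exact le_min hT0.le (by linarith [hmu0 X, hconf0 _ (hmu0 X)])
  have hdBT : ∀ X : ℝ, deltaBar μ T rank Tb δ X ≤ (T:ℝ) := fun X => min_le_left _ _
  set S := {X : ℝ | 0 ≤ X ∧ X ≤ ((T : ℝ) - deltaBar μ T rank Tb δ X) / (T : ℝ)} with hS
  have hbdd : BddAbove S := by
    refine ⟨1, fun X hX => ?_⟩
    obtain ⟨h1, h2⟩ := hX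
    calc X ≤ ((T : ℝ) - deltaBar μ T rank Tb δ X) / (T : ℝ) := h2
      _ ≤ 1 := by
        rw [div_le_one hT0]
        linarith [hdB0 X]
  have h0mem : (0:ℝ) ∈ S := by
    refine ⟨le_refl 0, ?_⟩
    rw [le_div_iff₀ hT0]
    simp only [zero_mul]
    linarith [hdBT 0]
  have hXl : Xlower μ T rank Tb δ = sSup S := rfl
  have hXT : (1 - 3 * (T:ℝ) * p - L / (T:ℝ)) * (T:ℝ) = (T:ℝ) - 3 * (T:ℝ)^2 * p - L := by
    field_simp
  have hmain : 1 - 3 * (T:ℝ) * p - L / (T:ℝ) ≤ Xlower μ T rank Tb δ := by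
    rcases le_or_gt (1 - 3 * (T:ℝ) * p - L / (T:ℝ)) 0 with hneg | hpos
    · exact hneg.trans (le_csSup hbdd h0mem)
    · refine le_csSup hbdd ⟨hpos.le, ?_⟩
      rw [le_div_iff₀ hT0, hXT]
      linarith [hdB (1 - 3 * (T:ℝ) * p - L / (T:ℝ))]
  exact ⟨hmain, by linarith⟩
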